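/- Let P be a zigzag poset with extrema {z_i | i ∈ Γ} and associated total order ⊑, and let I be a nonempty subset of P. Then the following are equivalent: (1) I is an interval in the poset P; (2) for all x, y, z ∈ P with x ⊑ y ⊑ z, if x ∈ I and z ∈ I then y ∈ I. -/

import Mathlib

universe u v w w'

/-- A persistence module indexed by a poset `P`, over a field `k`. -/
structure PersMod (k : Type u) [Field k] (P : Type v) [PartialOrder P] :
    Type (max u v (w + 1)) where
  space : P → Type w
  [acg : ∀ x, AddCommGroup (space x)]
  [mod : ∀ x, Module k (space x)]
  map : ∀ {x y : P}, x ≤ y → (space x →ₗ[k] space y)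
  map_id : ∀ x : P, map (le_refl x) = LinearMap.id
  map_comp : ∀ {x y z : P} (hxy : x ≤ y) (hyz : y ≤ z),
    (map hyz).comp (map hxy) = map (hxy.trans hyz)

attribute [instance] PersMod.acg PersMod.mod

variable (k : Type u) [Field k] {P : Type v} [PartialOrder P]

/-- A morphism of persistence modules (a natural transformation). -/
structure PersHom (V : PersMod.{u, v, w} k P) (W : PersMod.{u, v, w'} k P) where
  app : ∀ x : P, V.space x →ₗ[k] W.space x
  natural : ∀ {x y : P} (h : x ≤ y) (v : V.space x),
    app y (V.map h v) = W.map h (app x v)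

/-- An isomorphism of persistence modules. -/
structure PersIso (V : PersMod.{u, v, w} k P) (W : PersMod.{u, v, w'} k P) where
  app : ∀ x : P, V.space x ≃ₗ[k] W.space x
  natural : ∀ {x y : P} (h : x ≤ y) (v : V.space x),
    app y (V.map h v) = W.map h (app x v)

/-- A subset `I` of a poset is convex if `x ≤ y ≤ z`, `x ∈ I`, `z ∈ I` imply `y ∈ I`. -/
def IsConvexIn (I : Set P) : Prop :=
  ∀ ⦃x y z : P⦄, x ∈ I → z ∈ I → x ≤ y → y ≤ z → y ∈ I

/-- A subset `I` of a poset is connected if any two points of `I` are joined by a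
zigzag path inside `I`. -/
def IsConnectedIn (I : Set P) : Prop :=
  ∀ x ∈ I, ∀ z ∈ I, ∃ (n : ℕ) (c : ℕ → P), (∀ i ≤ n, c i ∈ I) ∧ c 0 = x ∧ c n = z ∧
    ∀ i < n, c i ≤ c (i + 1) ∨ c (i + 1) ≤ c i

/-- An interval in a poset: nonempty, convex and connected. -/
def IsPosetInterval (I : Set P) : Prop :=
  I.Nonempty ∧ IsConvexIn I ∧ IsConnectedIn I

open Classical in
/-- The subspace of `k` used as the value of the constant module at `x`. -/
noncomputable def constSub (I : Set P) (x : P) : Submodule k k :=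
  if x ∈ I then ⊤ else ⊥

open Classical in
/-- The structure map of the constant module. -/
noncomputable def constMap (I : Set P) (x y : P) :
    constSub k I x →ₗ[k] constSub k I y :=
  LinearMap.codRestrict (constSub k I y)
    ((if y ∈ I then (LinearMap.id : k →ₗ[k] k) else 0).comp (constSub k I x).subtype)
    (fun c => by
      by_cases hy : y ∈ I
      · simp [constSub, hy]
      · rw [constSub, if_neg hy, if_neg hy]
        exact (Submodule.mem_bot k).2 (by simp))

open Classical in
/-- The constant (interval) module `M(I)` attached to a convex subset `I`. -/
noncomputable def constMod (I : Set P) (hI : IsConvexIn I) : PersMod.{u, v, u} k P where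
  space x := constSub k I x
  map {x y} _ := constMap k I x y
  map_id := fun x => by
    ext c
    by_cases hx : x ∈ I
    · simp [constMap, hx]
    · have hc : (c : k) = 0 := by
        have h2 : constSub k I x = ⊥ := if_neg hx
        have key : ∀ v : k, v ∈ constSub k I x → v = 0 := by
          intro v hv
          rw [h2] at hv
          exact (Submodule.mem_bot k).1 hv
        exact key _ c.2
      simp [constMap, hx, hc]
  map_comp := fun {x y z} hxy hyz => by
    ext c
    by_cases hz : z ∈ I
    · by_cases hy : y ∈ I
      · simp [constMap, hy, hz]
      · have hx : x ∉ I := fun hx => hy (hI hx hz hxy hyz)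
        have hc : (c : k) = 0 := by
          have h2 : constSub k I x = ⊥ := if_neg hx
          have key : ∀ v : k, v ∈ constSub k I x → v = 0 := by
            intro v hv
            rw [h2] at hv
            exact (Submodule.mem_bot k).1 hv
          exact key _ c.2
        simp [constMap, hy, hz, hc]
    · simp [constMap, hz]

/-- A submodule of a persistence module: a family of subspaces preserved by the
structure maps. -/
structure PersSubmod (V : PersMod.{u, v, w} k P) where
  carrier : ∀ x : P, Submodule k (V.space x)
  mapLe : ∀ {x y : P} (h : x ≤ y), ∀ v ∈ carrier x, V.map h v ∈ carrier y

/-- A submodule of a persistence module, viewed as a persistence module in its own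
right. -/
def PersSubmod.toPersMod {V : PersMod.{u, v, w} k P} (U : PersSubmod k V) :
    PersMod.{u, v, w} k P where
  space x := U.carrier x
  map {x y} h := (V.map h).restrict (U.mapLe h)
  map_id := fun x => by
    ext c
    simp [LinearMap.restrict_apply, V.map_id]
  map_comp := fun {x y z} hxy hyz => by
    ext c
    have := LinearMap.congr_fun (V.map_comp hxy hyz) (c : V.space x)
    simpa [LinearMap.restrict_apply] using this

/-- A persistence module is an interval module if it is isomorphic to a constant
module `M(I)` for some interval `I`. -/
def IsIntervalModule (V : PersMod.{u, v, w} k P) : Prop :=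
  ∃ (I : Set P) (hI : IsPosetInterval I), Nonempty (PersIso k V (constMod k I hI.2.1))

/-- `A` is an internal direct sum decomposition of `V`:
at each point the subspaces are independent and span everything. -/
def IsDecomp (V : PersMod.{u, v, w} k P) (A : Set (PersSubmod k V)) : Prop :=
  ∀ x : P, iSupIndep (fun U : A => (U : PersSubmod k V).carrier x) ∧
    ⨆ U : A, (U : PersSubmod k V).carrier x = ⊤

/-- An interval decomposition of `V`. -/
def IsIntervalDecomp (V : PersMod.{u, v, w} k P) (A : Set (PersSubmod k V)) : Prop :=
  IsDecomp k V A ∧ ∀ U ∈ A, IsIntervalModule k U.toPersMod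

/-- `V` has an interval decomposition. -/
def HasIntervalDecomp (V : PersMod.{u, v, w} k P) : Prop :=
  ∃ A : Set (PersSubmod k V), IsIntervalDecomp k V A

/-- `P` is a zigzag poset with extrema `z i` (`i ∈ Γ ⊆ ℤ`) and associated total
order `sq` (`⊑`): `sq` is a total order on the underlying set of `P` such that
(1) `i < j` in `Γ` implies `z i ⊏ z j`; (2) any pair `x ≤ y` in `P` lies between two
consecutive extrema with respect to `⊑`; (3) between consecutive extrema, the partial
order of `P` agrees with `⊑` or with its reverse, alternating with the parity of the
index. -/
def IsZigzagWith {P : Type v} [PartialOrder P] (Γ : Set ℤ) (z : ℤ → P)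
    (sq : P → P → Prop) : Prop :=
  IsLinearOrder P sq ∧
  (∀ i ∈ Γ, ∀ j ∈ Γ, i < j → sq (z i) (z j) ∧ z i ≠ z j) ∧
  (∀ x y : P, x ≤ y → ∃ i : ℤ, i ∈ Γ ∧ i + 1 ∈ Γ ∧
    sq (z i) x ∧ sq x (z (i + 1)) ∧ sq (z i) y ∧ sq y (z (i + 1))) ∧
  ((∀ i : ℤ, i ∈ Γ → i + 1 ∈ Γ → ∀ x y : P,
      sq (z i) x → sq x y → sq y (z (i + 1)) →
      (Odd i → x ≤ y) ∧ (Even i → y ≤ x)) ∨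
   (∀ i : ℤ, i ∈ Γ → i + 1 ∈ Γ → ∀ x y : P,
      sq (z i) x → sq x y → sq y (z (i + 1)) →
      (Odd i → y ≤ x) ∧ (Even i → x ≤ y)))

/-- `P` is a zigzag poset with extrema `z i`, `i ∈ Γ`. -/
def IsZigzag {P : Type v} [PartialOrder P] (Γ : Set ℤ) (z : ℤ → P) : Prop :=
  ∃ sq : P → P → Prop, IsZigzagWith Γ z sq

/-- The restriction of a persistence module to a full subposet. -/
def restrictMod {P : Type v} [PartialOrder P] (V : PersMod.{u, v, w} k P)
    (S : Set P) : PersMod.{u, v, w} k S where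
  space x := V.space x.1
  map {_ _} h := V.map (Subtype.coe_le_coe.mpr h)
  map_id := fun x => V.map_id x.1
  map_comp := fun h1 h2 => V.map_comp (Subtype.coe_le_coe.mpr h1) (Subtype.coe_le_coe.mpr h2)

/-- Characterisation of intervals in a zigzag poset: a nonempty subset `I` is an
interval in `P` if and only if it is convex with respect to the associated total
order `⊑`. -/
theorem zigzag_interval_iff (P : Type v) [PartialOrder P]
    (Γ : Set ℤ) (z : ℤ → P) (sq : P → P → Prop)
    (hΓ : (∃ n : ℤ, 2 ≤ n ∧ Γ = Set.Icc 1 n) ∨ Γ = {i : ℤ | 0 ≤ i} ∨ Γ = Set.univ)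
    (hzz : IsZigzagWith Γ z sq)
    (I : Set P) (hne : I.Nonempty) :
    IsPosetInterval I ↔
      ∀ x y w : P, sq x y → sq y w → x ∈ I → w ∈ I → y ∈ I := by
  
  obtain ⟨hlin, hmono, hblock, hpar⟩ := hzz
  haveI : IsLinearOrder P sq := hlin
  -- `between`: sq-betweenness implies ≤-betweenness for ≤-comparable endpoints
  have between : ∀ a b t : P, a ≤ b →
      (sq a t ∧ sq t b) ∨ (sq b t ∧ sq t a) →
      (a ≤ t ∧ t ≤ b) ∨ (b ≤ t ∧ t ≤ a) := by
    intro a b t hab ht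
    obtain ⟨i, hi, hi1, hza, haz, hzb, hbz⟩ := hblock a b hab
    have hzt : sq (z i) t := by
      rcases ht with ⟨h1, _⟩ | ⟨h1, _⟩
      · exact trans_of sq hza h1
      · exact trans_of sq hzb h1
    have htz : sq t (z (i + 1)) := by
      rcases ht with ⟨_, h2⟩ | ⟨_, h2⟩
      · exact trans_of sq h2 hbz
      · exact trans_of sq h2 haz
    have key : (∀ u v : P, sq (z i) u → sq u v → sq v (z (i + 1)) → u ≤ v) ∨
               (∀ u v : P, sq (z i) u → sq u v → sq v (z (i + 1)) → v ≤ u) := by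
      rcases hpar with hp | hp <;> rcases Int.even_or_odd i with he | he
      · exact Or.inr fun u v h1 h2 h3 => (hp i hi hi1 u v h1 h2 h3).2 he
      · exact Or.inl fun u v h1 h2 h3 => (hp i hi hi1 u v h1 h2 h3).1 he
      · exact Or.inl fun u v h1 h2 h3 => (hp i hi hi1 u v h1 h2 h3).2 he
      · exact Or.inr fun u v h1 h2 h3 => (hp i hi hi1 u v h1 h2 h3).1 he
    rcases key with hk | hk
    · rcases ht with ⟨h1, h2⟩ | ⟨h1, h2⟩
      · exact Or.inl ⟨hk a t hza h1 htz, hk t b hzt h2 hbz⟩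
      · exact Or.inr ⟨hk b t hzb h1 htz, hk t a hzt h2 haz⟩
    · rcases ht with ⟨h1, h2⟩ | ⟨h1, h2⟩
      · exact Or.inr ⟨hk t b hzt h2 hbz, hk a t hza h1 htz⟩
      · exact Or.inl ⟨hk t a hzt h2 haz, hk b t hzb h1 htz⟩
  -- comparability within a block
  have cmp : ∀ i : ℤ, i ∈ Γ → i + 1 ∈ Γ → ∀ u v : P,
      sq (z i) u → sq u v → sq v (z (i + 1)) → u ≤ v ∨ v ≤ u := by
    intro i hi hi1 u v h1 h2 h3
    rcases hpar with hp | hp <;> rcases Int.even_or_odd i with he | he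
    · exact Or.inr ((hp i hi hi1 u v h1 h2 h3).2 he)
    · exact Or.inl ((hp i hi hi1 u v h1 h2 h3).1 he)
    · exact Or.inl ((hp i hi hi1 u v h1 h2 h3).2 he)
    · exact Or.inr ((hp i hi hi1 u v h1 h2 h3).1 he)
  -- Γ is an interval of ℤ
  have hΓint : ∀ a ∈ Γ, ∀ b ∈ Γ, ∀ m : ℤ, a ≤ m → m ≤ b → m ∈ Γ := by
    rcases hΓ with ⟨n, _, rfl⟩ | rfl | rfl
    · intro a ha b hb m h1 h2
      simp only [Set.mem_Icc] at ha hb ⊢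
      exact ⟨ha.1.trans h1, h2.trans hb.2⟩
    · intro a ha b _ m h1 _
      simp only [Set.mem_setOf_eq] at ha ⊢
      exact ha.trans h1
    · intro a _ b _ m _ _
      exact Set.mem_univ m
  constructor
  · -- interval → sq-convex
    rintro ⟨-, hconv, hconn⟩ x y w hxy hyw hx hw
    have step : ∀ (n : ℕ) (c : ℕ → P), (∀ i ≤ n, c i ∈ I) →
        (∀ i < n, c i ≤ c (i + 1) ∨ c (i + 1) ≤ c i) →
        ∀ t : P, sq (c 0) t → sq t (c n) → t ∈ I := by
      intro n
      induction n with
      | zero =>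
        intro c hmem _ t h1 h2
        have : t = c 0 := antisymm_of sq h2 h1
        rw [this]; exact hmem 0 le_rfl
      | succ n ih =>
        intro c hmem hstep t h1 h2
        rcases total_of sq t (c n) with h | h
        · exact ih c (fun i hi => hmem i (hi.trans (Nat.le_succ n)))
            (fun i hi => hstep i (hi.trans (Nat.lt_succ_self n))) t h1 h
        · rcases hstep n (Nat.lt_succ_self n) with hle | hle
          · rcases between (c n) (c (n + 1)) t hle (Or.inl ⟨h, h2⟩) with ⟨ha, hb⟩ | ⟨ha, hb⟩
            · exact hconv (hmem n (Nat.le_succ n)) (hmem (n + 1) le_rfl) ha hb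
            · exact hconv (hmem (n + 1) le_rfl) (hmem n (Nat.le_succ n)) ha hb
          · rcases between (c (n + 1)) (c n) t hle (Or.inr ⟨h, h2⟩) with ⟨ha, hb⟩ | ⟨ha, hb⟩
            · exact hconv (hmem (n + 1) le_rfl) (hmem n (Nat.le_succ n)) ha hb
            · exact hconv (hmem n (Nat.le_succ n)) (hmem (n + 1) le_rfl) ha hb
    obtain ⟨n, c, hmem, hc0, hcn, hstep⟩ := hconn x hx w hw
    exact step n c hmem hstep y (by rw [hc0]; exact hxy) (by rw [hcn]; exact hyw)
  · -- sq-convex → interval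
    intro hsq
    refine ⟨hne, ?_, ?_⟩
    · -- convexity
      intro x y w hx hw hxy hyw
      rcases total_of sq x y with h1 | h1 <;> rcases total_of sq y w with h2 | h2
      · exact hsq x y w h1 h2 hx hw
      · -- sq x y, sq w y
        rcases total_of sq x w with h3 | h3
        · rcases between x y w hxy (Or.inl ⟨h3, h2⟩) with ⟨ha, hb⟩ | ⟨ha, hb⟩
          · rw [le_antisymm hyw hb]; exact hw
          · rw [le_antisymm hyw (hb.trans hxy)]; exact hw
        · rcases between y w x hyw (Or.inr ⟨h3, h1⟩) with ⟨ha, hb⟩ | ⟨ha, hb⟩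
          · rw [le_antisymm ha hxy]; exact hx
          · rw [le_antisymm hyw (ha.trans hxy)]; exact hw
      · -- sq y x, sq y w
        rcases total_of sq x w with h3 | h3
        · rcases between y w x hyw (Or.inl ⟨h1, h3⟩) with ⟨ha, hb⟩ | ⟨ha, hb⟩
          · rw [le_antisymm ha hxy]; exact hx
          · rw [le_antisymm hyw (ha.trans hxy)]; exact hw
        · rcases between x y w hxy (Or.inr ⟨h2, h3⟩) with ⟨ha, hb⟩ | ⟨ha, hb⟩
          · rw [le_antisymm hyw hb]; exact hw
          · rw [le_antisymm (ha.trans hb) hxy]; exact hx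
      · exact hsq w y x h2 h1 hw hx
    · -- connectedness
      have conn : ∀ x ∈ I, ∀ w ∈ I, sq x w → ∃ (n : ℕ) (c : ℕ → P),
          (∀ i ≤ n, c i ∈ I) ∧ c 0 = x ∧ c n = w ∧
          ∀ i < n, c i ≤ c (i + 1) ∨ c (i + 1) ≤ c i := by
        intro x hx w hw hxw
        obtain ⟨i, hi, hi1, hzx, hxz, -, -⟩ := hblock x x le_rfl
        obtain ⟨j, hj, hj1, hzw, hwz, -, -⟩ := hblock w w le_rfl
        rcases lt_trichotomy i j with hij | hij | hij
        · -- chain through extrema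
          set n : ℕ := (j - i).toNat with hn
          have hnz : (n : ℤ) = j - i := Int.toNat_of_nonneg (by omega)
          have hn1 : 1 ≤ n := by omega
          refine ⟨n + 1, fun m => if m = 0 then x else if m ≤ n then z (i + (m : ℤ)) else w,
            ?_, by simp, by simp [Nat.succ_ne_zero], ?_⟩
          · intro m hm
            by_cases h0 : m = 0
            · simpa [h0] using hx
            · by_cases hmn : m ≤ n
              · simp only [h0, if_false, hmn, if_true]
                have hm1 : (1 : ℤ) ≤ (m : ℤ) := by
                  exact_mod_cast Nat.one_le_iff_ne_zero.mpr h0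
                have him : i + (m : ℤ) ∈ Γ :=
                  hΓint i hi j hj _ (by omega) (by omega)
                have hi1m : i + 1 ∈ Γ := hi1
                have h1 : sq x (z (i + (m : ℤ))) := by
                  rcases eq_or_lt_of_le hm1 with he | hlt
                  · have : i + (m : ℤ) = i + 1 := by omega
                    rw [this]; exact hxz
                  · exact trans_of sq hxz
                      (hmono (i + 1) hi1 (i + (m : ℤ)) him (by omega)).1
                have h2 : sq (z (i + (m : ℤ))) w := by
                  rcases eq_or_lt_of_le (show (m : ℤ) ≤ (n : ℤ) by exact_mod_cast hmn)
                    with he | hlt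
                  · have : i + (m : ℤ) = j := by omega
                    rw [this]; exact hzw
                  · exact trans_of sq
                      (hmono (i + (m : ℤ)) him j hj (by omega)).1 hzw
                exact hsq x (z (i + (m : ℤ))) w h1 h2 hx hw
              · simpa [h0, hmn] using hw
          · intro m hm
            by_cases h0 : m = 0
            · subst h0
              simp only [if_pos rfl, Nat.one_ne_zero, if_false, hn1, if_true]
              have : ((1 : ℕ) : ℤ) = 1 := rfl
              rw [show i + ((1 : ℕ) : ℤ) = i + 1 by push_cast; ring]
              exact cmp i hi hi1 x (z (i + 1)) hzx hxz (refl_of sq _)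
            · by_cases hmn : m < n
              · have hm1 : m + 1 ≤ n := hmn
                have h0' : m + 1 ≠ 0 := Nat.succ_ne_zero m
                simp only [h0, if_false, Nat.le_of_lt hmn, if_true, h0', hm1]
                have him : i + (m : ℤ) ∈ Γ := hΓint i hi j hj _ (by omega) (by omega)
                have him1 : i + (m : ℤ) + 1 ∈ Γ := hΓint i hi j hj _ (by omega) (by omega)
                have e : i + ((m + 1 : ℕ) : ℤ) = i + (m : ℤ) + 1 := by push_cast; ring
                rw [e]
                exact cmp (i + (m : ℤ)) him him1 (z (i + (m : ℤ))) (z (i + (m : ℤ) + 1))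
                  (refl_of sq _) (hmono _ him _ him1 (by omega)).1 (refl_of sq _)
              · have hmn' : m = n := by omega
                have hmle : m ≤ n := by omega
                have hm1n : ¬ m + 1 ≤ n := by omega
                have h0' : m + 1 ≠ 0 := Nat.succ_ne_zero m
                simp only [h0, if_false, hmle, if_true, h0', hm1n]
                have e : i + (m : ℤ) = j := by omega
                rw [e]
                exact cmp j hj hj1 (z j) w (refl_of sq _) hzw hwz
        · -- same block
          subst hij
          refine ⟨1, fun m => if m = 0 then x else w, ?_, by simp, by simp, ?_⟩
          · intro m _
            by_cases h0 : m = 0 <;> simp [h0, hx, hw]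
          · intro m hm
            interval_cases m
            simpa using cmp i hi hi1 x w hzx hxw hwz
        · -- j < i forces x = w
          have hzz' : sq (z (j + 1)) (z i) := by
            rcases eq_or_lt_of_le (show j + 1 ≤ i by omega) with he | hlt
            · rw [he]; exact refl_of sq _
            · exact (hmono (j + 1) hj1 i hi hlt).1
          have hwx : sq w x := trans_of sq (trans_of sq hwz hzz') hzx
          have : x = w := antisymm_of sq hxw hwx
          subst this
          exact ⟨0, fun _ => x, fun _ _ => hx, rfl, rfl, fun i hi => absurd hi (by omega)⟩
      intro x hx w hw
      rcases total_of sq x w with h | h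
      · exact conn x hx w hw h
      · obtain ⟨n, c, h1, h2, h3, h4⟩ := conn w hw x hx h
        refine ⟨n, fun m => c (n - m), fun m _ => h1 (n - m) (Nat.sub_le n m),
          by simp [h3], by simp [h2], ?_⟩
        intro m hm
        have e1 : n - m = (n - (m + 1)) + 1 := by omega
        rcases h4 (n - (m + 1)) (by omega) with h' | h'
        · right; show c (n - (m + 1)) ≤ c (n - m); rw [e1]; exact h'
        · left; show c (n - m) ≤ c (n - (m + 1)); rw [e1]; exact h'
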